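/- For each integer L ≥ 2, let q_L be the probability distribution on Fin L with q_L(0) = L^{−1/2} and q_L(i) = (1 − L^{−1/2})/(L−1) for i ≠ 0. Then R₂(q_L)/log L → 1 as L → ∞, and for every α > 2, R_α(q_L)/log L → α/(2(α−1)) as L → ∞. Since α/(2(α−1)) < 1 for α > 2, this family has α-Rényi entropy asymptotically strictly smaller than its second Rényi entropy. -/

import Mathlib

open Finset Filter

noncomputable section

/-- Rényi entropy of order `α` of a distribution on `Fin L` (Shannon entropy at `α = 1`),
with natural logarithms, the sums running over the support of `p`. -/
def renyi {L : ℕ} (α : ℝ) (p : Fin L → ℝ) : ℝ :=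
  if α = 1 then -∑ s, (if 0 < p s then p s * Real.log (p s) else 0)
  else (1 - α)⁻¹ * Real.log (∑ s, (if 0 < p s then p s ^ α else 0))

/-- The distribution `{L^{-1/2}, (1-L^{-1/2})/(L-1), …}` on `Fin L`. -/
def qSpike (L : ℕ) : Fin L → ℝ :=
  fun i => if (i : ℕ) = 0 then (L : ℝ) ^ (-(1 / 2) : ℝ)
    else (1 - (L : ℝ) ^ (-(1 / 2) : ℝ)) / ((L : ℝ) - 1)

lemma qspike_aux_l1 {L : ℕ} (hL : 2 ≤ L) : (1 : ℝ) < (L : ℝ) := by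
  exact_mod_cast Nat.lt_of_lt_of_le Nat.one_lt_two hL

lemma qspike_A_lt_one {L : ℕ} (hL : 2 ≤ L) : (L : ℝ) ^ (-(1 / 2) : ℝ) < 1 :=
  Real.rpow_lt_one_of_one_lt_of_neg (qspike_aux_l1 hL) (by norm_num)

lemma qSpike_pos {L : ℕ} (hL : 2 ≤ L) (i : Fin L) : 0 < qSpike L i := by
  have h1 := qspike_aux_l1 hL
  have hA := qspike_A_lt_one hL
  unfold qSpike
  split
  · exact Real.rpow_pos_of_pos (by linarith) _
  · exact div_pos (by linarith) (by linarith)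

lemma sum_qSpike {L : ℕ} (hL : 2 ≤ L) (α : ℝ) :
    ∑ s : Fin L, (if 0 < qSpike L s then qSpike L s ^ α else 0)
      = ((L : ℝ) ^ (-(1 / 2) : ℝ)) ^ α
        + ((L : ℝ) - 1) * ((1 - (L : ℝ) ^ (-(1 / 2) : ℝ)) / ((L : ℝ) - 1)) ^ α := by
  set A : ℝ := (L : ℝ) ^ (-(1 / 2) : ℝ) with hA
  set B : ℝ := (1 - A) / ((L : ℝ) - 1) with hB
  have hs : ∀ s : Fin L, (if 0 < qSpike L s then qSpike L s ^ α else 0)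
      = (fun n : ℕ => if n = 0 then A ^ α else B ^ α) (s : ℕ) := by
    intro s
    rw [if_pos (qSpike_pos hL s)]
    simp only [qSpike, hA, hB]
    by_cases h : (s : ℕ) = 0 <;> simp [h]
  rw [Finset.sum_congr rfl fun s _ => hs s,
    Fin.sum_univ_eq_sum_range (fun n : ℕ => if n = 0 then A ^ α else B ^ α) L]
  have h2 : ∀ i ∈ Finset.range L, (if i = 0 then A ^ α else B ^ α)
      = B ^ α + (if i = 0 then A ^ α - B ^ α else 0) := by
    intro i _; split <;> ring
  rw [Finset.sum_congr rfl h2, Finset.sum_add_distrib, Finset.sum_const, Finset.card_range,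
    Finset.sum_ite_eq' (Finset.range L) 0 (fun _ => A ^ α - B ^ α),
    if_pos (Finset.mem_range.mpr (by omega))]
  have : (L : ℝ) ≠ 0 := by positivity
  push_cast [nsmul_eq_mul]
  ring

lemma qspike_key (α : ℝ) (hα : 2 ≤ α) :
    Tendsto (fun L : ℕ => renyi α (qSpike L) / Real.log L) atTop
      (nhds (α / (2 * (α - 1)))) := by
  have hα1 : (1 : ℝ) - α ≠ 0 := by linarith
  set g : ℕ → ℝ := fun L =>
    1 + (1 - (L : ℝ) ^ (-(1 / 2) : ℝ)) ^ α * ((L : ℝ) - 1) ^ ((1 : ℝ) - α) * (L : ℝ) ^ (α / 2)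
    with hg
  -- eventual pointwise formula
  have E : ∀ L : ℕ, 2 ≤ L → renyi α (qSpike L) / Real.log L
      = (1 - α)⁻¹ * (Real.log (g L) / Real.log L) - (1 - α)⁻¹ * (α / 2) := by
    intro L hL
    have hl1 : (1 : ℝ) < (L : ℝ) := qspike_aux_l1 hL
    have hl0 : (0 : ℝ) < (L : ℝ) := by linarith
    have hA1 : (L : ℝ) ^ (-(1 / 2) : ℝ) < 1 := qspike_A_lt_one hL
    have hA0 : 0 < (L : ℝ) ^ (-(1 / 2) : ℝ) := Real.rpow_pos_of_pos hl0 _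
    set l : ℝ := (L : ℝ)
    set A : ℝ := l ^ (-(1 / 2) : ℝ) with hAdef
    have hAα : A ^ α = l ^ (-(α / 2)) := by
      rw [hAdef, ← Real.rpow_mul hl0.le, show (-(1 / 2) : ℝ) * α = -(α / 2) by ring]
    have hBα : (l - 1) * ((1 - A) / (l - 1)) ^ α = (1 - A) ^ α * (l - 1) ^ ((1 : ℝ) - α) := by
      rw [Real.div_rpow (by linarith) (by linarith), Real.rpow_sub (by linarith), Real.rpow_one]
      have h1 : (l - 1) ^ α ≠ 0 := ne_of_gt (Real.rpow_pos_of_pos (by linarith) _)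
      field_simp
    have hmul : l ^ (-(α / 2)) * l ^ (α / 2) = 1 := by
      rw [← Real.rpow_add hl0]
      norm_num
    have hsum : ∑ s : Fin L, (if 0 < qSpike L s then qSpike L s ^ α else 0)
        = l ^ (-(α / 2)) * g L := by
      rw [sum_qSpike hL α, hAα, hBα]
      have hexp : l ^ (-(α / 2)) * g L = l ^ (-(α / 2))
          + (1 - A) ^ α * (l - 1) ^ ((1 : ℝ) - α) * (l ^ (-(α / 2)) * l ^ (α / 2)) := by
        simp only [hg]
        ring
      rw [hexp, hmul, mul_one]
    have hg1 : 1 ≤ g L := by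
      have h0 : 0 ≤ (1 - A) ^ α * (l - 1) ^ ((1 : ℝ) - α) * l ^ (α / 2) :=
        mul_nonneg (mul_nonneg (Real.rpow_nonneg (by linarith) _)
          (Real.rpow_nonneg (by linarith) _)) (Real.rpow_nonneg (by linarith) _)
      simp only [hg]
      linarith
    have hrenyi : renyi α (qSpike L)
        = (1 - α)⁻¹ * (-(α / 2) * Real.log l + Real.log (g L)) := by
      rw [renyi, if_neg (by intro h; rw [h] at hα; linarith), hsum,
        Real.log_mul (ne_of_gt (Real.rpow_pos_of_pos hl0 _)) (by linarith),
        Real.log_rpow hl0]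
    have hlog : 0 < Real.log l := Real.log_pos hl1
    rw [hrenyi]
    field_simp
    ring
  -- squeeze for log g / log L
  have hgbound : ∀ L : ℕ, 2 ≤ L → g L ≤ 1 + (2 : ℝ) ^ (α - 1) := by
    intro L hL
    have hl1 : (1 : ℝ) < (L : ℝ) := qspike_aux_l1 hL
    have hl2 : (2 : ℝ) ≤ (L : ℝ) := by exact_mod_cast hL
    have hl0 : (0 : ℝ) < (L : ℝ) := by linarith
    have hA1 : (L : ℝ) ^ (-(1 / 2) : ℝ) < 1 := qspike_A_lt_one hL
    have hA0 : 0 < (L : ℝ) ^ (-(1 / 2) : ℝ) := Real.rpow_pos_of_pos hl0 _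
    set l : ℝ := (L : ℝ)
    set A : ℝ := l ^ (-(1 / 2) : ℝ)
    have h1 : (1 - A) ^ α ≤ 1 := Real.rpow_le_one (by linarith) (by linarith) (by linarith)
    have h2 : l ^ (α / 2) ≤ l ^ (α - 1) :=
      Real.rpow_le_rpow_of_exponent_le hl1.le (by linarith)
    have h3 : l ^ (α - 1) ≤ (2 * (l - 1)) ^ (α - 1) :=
      Real.rpow_le_rpow hl0.le (by linarith) (by linarith)
    have h4 : (2 * (l - 1)) ^ (α - 1) = (2 : ℝ) ^ (α - 1) * (l - 1) ^ (α - 1) :=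
      Real.mul_rpow (by norm_num) (by linarith)
    have h5 : (l - 1) ^ ((1 : ℝ) - α) * (l - 1) ^ (α - 1) = 1 := by
      rw [← Real.rpow_add (by linarith)]
      norm_num
    have hpos : (0 : ℝ) ≤ (l - 1) ^ ((1 : ℝ) - α) := Real.rpow_nonneg (by linarith) _
    have h6 : (l - 1) ^ ((1 : ℝ) - α) * l ^ (α / 2) ≤ (2 : ℝ) ^ (α - 1) := by
      calc (l - 1) ^ ((1 : ℝ) - α) * l ^ (α / 2)
          ≤ (l - 1) ^ ((1 : ℝ) - α) * ((2 : ℝ) ^ (α - 1) * (l - 1) ^ (α - 1)) := by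
            apply mul_le_mul_of_nonneg_left _ hpos
            calc l ^ (α / 2) ≤ l ^ (α - 1) := h2
              _ ≤ (2 * (l - 1)) ^ (α - 1) := h3
              _ = (2 : ℝ) ^ (α - 1) * (l - 1) ^ (α - 1) := h4
        _ = ((l - 1) ^ ((1 : ℝ) - α) * (l - 1) ^ (α - 1)) * (2 : ℝ) ^ (α - 1) := by ring
        _ = (2 : ℝ) ^ (α - 1) := by rw [h5, one_mul]
    have hT : (1 - A) ^ α * (l - 1) ^ ((1 : ℝ) - α) * l ^ (α / 2) ≤ (2 : ℝ) ^ (α - 1) := by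
      have hprod : (0 : ℝ) ≤ (l - 1) ^ ((1 : ℝ) - α) * l ^ (α / 2) := by positivity
      calc (1 - A) ^ α * (l - 1) ^ ((1 : ℝ) - α) * l ^ (α / 2)
          = (1 - A) ^ α * ((l - 1) ^ ((1 : ℝ) - α) * l ^ (α / 2)) := by ring
        _ ≤ 1 * ((2 : ℝ) ^ (α - 1)) := by
            apply mul_le_mul h1 h6 hprod (by norm_num)
        _ = (2 : ℝ) ^ (α - 1) := one_mul _
    simp only [hg]
    linarith
  have hg1' : ∀ L : ℕ, 2 ≤ L → 1 ≤ g L := by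
    intro L hL
    have hl1 : (1 : ℝ) < (L : ℝ) := qspike_aux_l1 hL
    have hl0 : (0 : ℝ) < (L : ℝ) := by linarith
    have hA1 : (L : ℝ) ^ (-(1 / 2) : ℝ) < 1 := qspike_A_lt_one hL
    have : 0 ≤ (1 - (L : ℝ) ^ (-(1 / 2) : ℝ)) ^ α * ((L : ℝ) - 1) ^ ((1 : ℝ) - α)
        * (L : ℝ) ^ (α / 2) :=
      mul_nonneg (mul_nonneg (Real.rpow_nonneg (by linarith) _)
        (Real.rpow_nonneg (by linarith) _)) (Real.rpow_nonneg (by linarith) _)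
    simp only [hg]
    linarith
  have hf : Tendsto (fun L : ℕ => Real.log (g L) / Real.log (L : ℝ)) atTop (nhds 0) := by
    apply squeeze_zero' (g := fun L : ℕ => Real.log (1 + (2 : ℝ) ^ (α - 1)) / Real.log (L : ℝ))
    · filter_upwards [eventually_ge_atTop 2] with L hL
      have hl1 : (1 : ℝ) < (L : ℝ) := qspike_aux_l1 hL
      exact div_nonneg (Real.log_nonneg (hg1' L hL)) (Real.log_pos hl1).le
    · filter_upwards [eventually_ge_atTop 2] with L hL
      have hl1 : (1 : ℝ) < (L : ℝ) := qspike_aux_l1 hL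
      exact div_le_div_of_nonneg_right
        (Real.log_le_log (by linarith [hg1' L hL]) (hgbound L hL)) (Real.log_pos hl1).le
    · exact Tendsto.div_atTop tendsto_const_nhds
        (Real.tendsto_log_atTop.comp tendsto_natCast_atTop_atTop)
  have hval : (1 - α)⁻¹ * 0 - (1 - α)⁻¹ * (α / 2) = α / (2 * (α - 1)) := by
    have h2 : α - 1 ≠ 0 := by linarith
    field_simp
    ring
  have hlim : Tendsto (fun L : ℕ => (1 - α)⁻¹ * (Real.log (g L) / Real.log (L : ℝ))
      - (1 - α)⁻¹ * (α / 2)) atTop (nhds (α / (2 * (α - 1)))) := by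
    rw [← hval]
    exact (tendsto_const_nhds.mul hf).sub tendsto_const_nhds
  exact Tendsto.congr' ((eventually_ge_atTop 2).mono fun L hL => (E L hL).symm) hlim

/-- For the family `qSpike L`, `R₂(q_L)/log L → 1` while
`R_α(q_L)/log L → α/(2(α-1))` for every `α > 2`. -/
theorem qspike_family_renyi :
    Tendsto (fun L : ℕ => renyi 2 (qSpike L) / Real.log L) atTop (nhds 1) ∧
      ∀ α : ℝ, 2 < α →
        Tendsto (fun L : ℕ => renyi α (qSpike L) / Real.log L) atTop
          (nhds (α / (2 * (α - 1)))) := by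
  constructor
  · have h := qspike_key 2 le_rfl
    norm_num at h
    exact h
  · exact fun α hα => qspike_key α hα.le

end
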